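/- Every element of the Kiselman semigroup K_n distinct from the identity can be represented by a word in the generators of length at most L(n), where L(2k) = 2^{k+1} − 2 and L(2k+1) = 3·2^k − 2. Consequently K_n is finite with |K_n| ≤ 1 + n^{L(n)}. -/

import Mathlib

/-- The defining relations of the Kiselman semigroup `K_n`:
`aᵢ² = aᵢ`, and `aᵢaⱼaᵢ = aⱼaᵢaⱼ = aⱼaᵢ` for `i < j`. -/
inductive KisRel (n : ℕ) : FreeMonoid (Fin n) → FreeMonoid (Fin n) → Prop
  | idem (i : Fin n) : KisRel n (.of i * .of i) (.of i)
  | braid₁ {i j : Fin n} (h : i < j) :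
      KisRel n (.of i * .of j * .of i) (.of j * .of i)
  | braid₂ {i j : Fin n} (h : i < j) :
      KisRel n (.of j * .of i * .of j) (.of j * .of i)

/-- The Kiselman semigroup (monoid) `K_n`. -/
abbrev Kiselman (n : ℕ) := PresentedMonoid (KisRel n)

/-- The canonical projection from the free monoid on the generators to `K_n`. -/
def kmk (n : ℕ) : FreeMonoid (Fin n) →* Kiselman n := PresentedMonoid.mk (KisRel n)

/-- The generator `a_{i+1}` (0-indexed: `ka i` is the paper's `a_{i+1}`). -/
def ka {n : ℕ} (i : Fin n) : Kiselman n := PresentedMonoid.of (KisRel n) i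

/-- The idempotent `e_X`: the product of the generators indexed by `X` in strictly
decreasing order of indices. -/
def eX {n : ℕ} (X : Finset (Fin n)) : Kiselman n :=
  kmk n (FreeMonoid.ofList ((X.sort (· ≤ ·)).reverse))

/-- `L(2k) = 2^{k+1} - 2`, `L(2k+1) = 3·2^k - 2`. -/
def Lbound (n : ℕ) : ℕ := if n % 2 = 0 then 2 ^ (n / 2 + 1) - 2 else 3 * 2 ^ (n / 2) - 2

lemma kis_rel {n : ℕ} {a b : FreeMonoid (Fin n)} (h : KisRel n a b) : kmk n a = kmk n b :=
  Quotient.sound (ConGen.Rel.of _ _ h)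

def km {n : ℕ} (l : List (Fin n)) : Kiselman n := kmk n (FreeMonoid.ofList l)

lemma km_nil {n : ℕ} : km ([] : List (Fin n)) = 1 := rfl

lemma km_append {n : ℕ} (x y : List (Fin n)) : km (x ++ y) = km x * km y := by
  unfold km; rw [← map_mul]; rfl

lemma km_cons {n : ℕ} (a : Fin n) (l : List (Fin n)) : km (a :: l) = ka a * km l := by
  have : (a :: l) = [a] ++ l := rfl
  rw [this, km_append]; rfl

lemma km_singleton {n : ℕ} (a : Fin n) : km [a] = ka a := rfl

lemma ka_idem {n : ℕ} (i : Fin n) : ka i * ka i = ka i := by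
  exact (by simpa [map_mul] using kis_rel (KisRel.idem i) :
    kmk n (.of i) * kmk n (.of i) = kmk n (.of i))

lemma ka_braid₁ {n : ℕ} {i j : Fin n} (h : i < j) : ka i * ka j * ka i = ka j * ka i := by
  exact (by simpa [map_mul] using kis_rel (KisRel.braid₁ h) :
    kmk n (.of i) * kmk n (.of j) * kmk n (.of i) = kmk n (.of j) * kmk n (.of i))

lemma ka_braid₂ {n : ℕ} {i j : Fin n} (h : i < j) : ka j * ka i * ka j = ka j * ka i := by
  exact (by simpa [map_mul] using kis_rel (KisRel.braid₂ h) :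
    kmk n (.of j) * kmk n (.of i) * kmk n (.of j) = kmk n (.of j) * kmk n (.of i))

/-- `a_s u a_s = u a_s` when all letters of `u` are greater than `s`. -/
lemma E1 {n : ℕ} (s : Fin n) : ∀ u : List (Fin n), (∀ a ∈ u, s < a) →
    km (s :: (u ++ [s])) = km (u ++ [s])
  | [], _ => by
      simp only [List.nil_append, km_cons, km_singleton]; exact ka_idem s
  | j :: v, h => by
      have hj : s < j := h j (by simp)
      have ih' : ka s * km (v ++ [s]) = km (v ++ [s]) := by
        rw [← km_cons]; exact E1 s v (fun a ha => h a (by simp [ha]))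
      rw [List.cons_append, km_cons, km_cons, ← ih']
      simp only [← mul_assoc]
      rw [ka_braid₁ hj]

/-- `a_l u a_l = a_l u` when all letters of `u` are smaller than `l`. -/
lemma E2 {n : ℕ} (l : Fin n) (u : List (Fin n)) (h : ∀ a ∈ u, a < l) :
    km ((l :: u) ++ [l]) = km (l :: u) := by
  induction u using List.reverseRecOn with
  | nil => simpa [km_cons, km_singleton, km_nil] using ka_idem l
  | append_singleton v j ih =>
      have hj : j < l := h j (by simp)
      have ih' : km (l :: v) * ka l = km (l :: v) := by
        have := ih (fun a ha => h a (by simp [ha]))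
        rwa [km_append, km_singleton] at this
      have h1 : (l :: (v ++ [j])) ++ [l] = ((l :: v) ++ [j]) ++ [l] := by simp
      have h2 : l :: (v ++ [j]) = (l :: v) ++ [j] := by simp
      rw [h1, h2, km_append, km_append, km_singleton, km_singleton, ← ih']
      simp only [mul_assoc]
      rw [show ka l * (ka j * ka l) = ka l * ka j from by
        rw [← mul_assoc]; exact ka_braid₂ hj]

/-- A word is reduced if between any two consecutive occurrences of a letter `j`
there is both a smaller and a larger letter. -/
def Reduced {n : ℕ} (w : List (Fin n)) : Prop :=
  ∀ x (j : Fin n) u y, w = x ++ j :: (u ++ j :: y) → j ∉ u →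
    (∃ a ∈ u, a < j) ∧ (∃ b ∈ u, j < b)

lemma reduce_aux {n : ℕ} : ∀ N (w : List (Fin n)), w.length ≤ N →
    ∃ w', km w' = km w ∧ w'.length ≤ w.length ∧ Reduced w' := by
  intro N
  induction N with
  | zero =>
      intro w hw
      have : w = [] := List.eq_nil_of_length_eq_zero (Nat.le_zero.mp hw)
      subst this
      refine ⟨[], rfl, le_refl _, ?_⟩
      intro x j u y h _
      have := congrArg List.length h
      simp only [List.length_nil, List.length_append, List.length_cons] at this
      omega
  | succ N ih =>
      intro w hw
      by_cases hr : Reduced w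
      · exact ⟨w, rfl, le_refl _, hr⟩
      · simp only [Reduced, not_forall] at hr
        obtain ⟨x, j, u, y, hwe, hju, hcond⟩ := hr
        rw [not_and_or] at hcond
        rcases hcond with hs | hl
        · -- no smaller letter in the gap: all letters of u are > j, remove first j
          push_neg at hs
          have hgt : ∀ a ∈ u, j < a := fun a ha =>
            lt_of_le_of_ne (hs a ha) (by rintro rfl; exact hju ha)
          have he1 : km (j :: (u ++ [j])) = km (u ++ [j]) := E1 j u hgt
          have hkmw : km w = km (x ++ ((u ++ [j]) ++ y)) := by
            rw [hwe, show x ++ j :: (u ++ j :: y) = x ++ ((j :: (u ++ [j])) ++ y) by simp]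
            simp only [km_append, he1, mul_assoc]
          have hlen : (x ++ ((u ++ [j]) ++ y)).length + 1 = w.length := by
            rw [hwe]
            simp only [List.length_append, List.length_cons, List.length_nil]
            omega
          obtain ⟨w', h1, h2, h3⟩ := ih (x ++ ((u ++ [j]) ++ y)) (by omega)
          exact ⟨w', by rw [h1, hkmw], by omega, h3⟩
        · -- no larger letter in the gap: all letters of u are < j, remove second j
          push_neg at hl
          have hlt : ∀ a ∈ u, a < j := fun a ha =>
            lt_of_le_of_ne (hl a ha) (by rintro rfl; exact hju ha)
          have he2 : km (j :: u) * km [j] = km (j :: u) := by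
            rw [← km_append]; exact E2 j u hlt
          have he2' : ∀ m : Kiselman n, km (j :: u) * (km [j] * m) = km (j :: u) * m := by
            intro m; rw [← mul_assoc, he2]
          have hkmw : km w = km (x ++ ((j :: u) ++ y)) := by
            rw [hwe, show x ++ j :: (u ++ j :: y) = x ++ (((j :: u) ++ [j]) ++ y) by simp]
            simp only [km_append, mul_assoc, he2, he2']
          have hlen : (x ++ ((j :: u) ++ y)).length + 1 = w.length := by
            rw [hwe]
            simp only [List.length_append, List.length_cons, List.length_nil]
            omega
          obtain ⟨w', h1, h2, h3⟩ := ih (x ++ ((j :: u) ++ y)) (by omega)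
          exact ⟨w', by rw [h1, hkmw], by omega, h3⟩

/-- Between any two consecutive occurrences of `j` there is a letter satisfying `p`. -/
def Gap {n : ℕ} (p : Fin n → Bool) (j : Fin n) (w : List (Fin n)) : Prop :=
  ∀ x u y, w = x ++ j :: (u ++ j :: y) → j ∉ u → ∃ a ∈ u, p a = true

lemma gap_suffix {n : ℕ} {p : Fin n → Bool} {j : Fin n} {x w : List (Fin n)}
    (h : Gap p j (x ++ w)) : Gap p j w := by
  intro x' u y hw hj
  exact h (x ++ x') u y (by rw [hw]; simp) hj

lemma first_split {n : ℕ} {j : Fin n} : ∀ {w : List (Fin n)}, j ∈ w →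
    ∃ x y, w = x ++ j :: y ∧ j ∉ x := by
  intro w
  induction w with
  | nil => simp
  | cons a w ih =>
      intro hm
      by_cases ha : j = a
      · exact ⟨[], w, by rw [ha]; simp, by simp⟩
      · obtain ⟨x, y, h1, h2⟩ := ih ((List.mem_cons.mp hm).resolve_left ha)
        exact ⟨a :: x, y, by rw [h1]; rfl, by simp [h2, ha]⟩

lemma gap_core {n : ℕ} (p : Fin n → Bool) (j : Fin n) : ∀ N (z : List (Fin n)), z.length ≤ N →
    Gap p j (j :: z) → z.count j ≤ z.countP p := by
  intro N
  induction N with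
  | zero =>
      intro z hz _
      have : z = [] := List.eq_nil_of_length_eq_zero (Nat.le_zero.mp hz)
      subst this; simp
  | succ N ih =>
      intro z hz hg
      by_cases hm : j ∈ z
      · obtain ⟨u, t, hzz, hju⟩ := first_split hm
        obtain ⟨a, ha, hpa⟩ := hg [] u t (by rw [hzz]; rfl) hju
        have hg' : Gap p j (j :: t) := by
          intro x' u' y' he hj'
          cases x' with
          | nil =>
              simp only [List.nil_append, List.cons.injEq, true_and] at he
              exact hg (j :: u) u' y' (by rw [hzz, he]; simp) hj'
          | cons c x'' =>
              simp only [List.cons_append, List.cons.injEq] at he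
              exact hg (j :: (u ++ j :: x'')) u' y' (by rw [hzz, he.2]; simp) hj'
        have hlt : t.length ≤ N := by
          have := congrArg List.length hzz
          simp only [List.length_append, List.length_cons] at this
          omega
        have ht := ih t hlt hg'
        have hcu : u.count j = 0 := List.count_eq_zero.mpr hju
        have h1 : z.count j = 1 + t.count j := by
          rw [hzz]; simp [List.count_append, hcu]; omega
        have h2 : 1 + t.countP p ≤ z.countP p := by
          have hu : 0 < u.countP p := List.countP_pos_iff.mpr ⟨a, ha, hpa⟩
          rw [hzz]; simp [List.countP_append, List.countP_cons]
          omega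
        omega
      · simp [List.count_eq_zero.mpr hm]

lemma count_le_of_gap {n : ℕ} {p : Fin n → Bool} {j : Fin n} {w : List (Fin n)}
    (hg : Gap p j w) : w.count j ≤ 1 + w.countP p := by
  by_cases hm : j ∈ w
  · obtain ⟨x, y, hw, hjx⟩ := first_split hm
    have hgy : Gap p j (j :: y) := gap_suffix (x := x) (by rw [← hw]; exact hg)
    have := gap_core p j y.length y le_rfl hgy
    rw [hw]
    simp only [List.count_append, List.countP_append, List.count_cons_self,
      List.count_eq_zero.mpr hjx, List.countP_cons]
    omega
  · simp [List.count_eq_zero.mpr hm]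

lemma countP_eq_sum {n : ℕ} (p : Fin n → Bool) (w : List (Fin n)) :
    w.countP p = ∑ i ∈ Finset.univ.filter (fun i => p i = true), w.count i := by
  induction w with
  | nil => simp
  | cons a w ih =>
      rw [List.countP_cons]
      simp only [List.count_cons, Finset.sum_add_distrib, ← ih]
      congr 1
      simp only [beq_iff_eq]
      rw [Finset.sum_ite_eq (Finset.univ.filter (fun i => p i = true)) a (fun _ => 1)]
      simp

lemma sum_range_two_pow (k : ℕ) : ∑ i ∈ Finset.range k, 2 ^ i = 2 ^ k - 1 := by
  induction k with
  | zero => simp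
  | succ k ih =>
      rw [Finset.sum_range_succ, ih, pow_succ]
      have : 1 ≤ 2 ^ k := Nat.one_le_two_pow
      omega

lemma sum_filter_lt {n : ℕ} (j : Fin n) (g : ℕ → ℕ) :
    ∑ i ∈ Finset.univ.filter (fun i : Fin n => i < j), g (i : ℕ)
      = ∑ k ∈ Finset.range (j : ℕ), g k := by
  refine Finset.sum_nbij' (fun i : Fin n => (i : ℕ))
    (fun k => if h : k < n then (⟨k, h⟩ : Fin n) else j) ?_ ?_ ?_ ?_ ?_
  · intro a ha
    simp only [Finset.mem_filter, Finset.mem_univ, true_and, Fin.lt_def] at ha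
    simpa [Finset.mem_range] using ha
  · intro k hk
    simp only [Finset.mem_range] at hk
    have hkn : k < n := lt_trans hk j.isLt
    beta_reduce
    rw [dif_pos hkn]
    simp only [Finset.mem_filter, Finset.mem_univ, true_and, Fin.lt_def]
    exact hk
  · intro a ha
    beta_reduce
    rw [dif_pos a.isLt]
  · intro k hk
    simp only [Finset.mem_range] at hk
    beta_reduce
    rw [dif_pos (lt_trans hk j.isLt)]
  · intro a ha
    rfl

lemma sum_filter_gt {n : ℕ} (j : Fin n) :
    ∑ i ∈ Finset.univ.filter (fun i : Fin n => j < i), 2 ^ (n - 1 - (i : ℕ))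
      = ∑ k ∈ Finset.range (n - 1 - (j : ℕ)), 2 ^ k := by
  have hn : 0 < n := j.pos
  refine Finset.sum_nbij' (fun i : Fin n => n - 1 - (i : ℕ))
    (fun k => (⟨n - 1 - k, by omega⟩ : Fin n)) ?_ ?_ ?_ ?_ ?_
  · intro a ha
    simp only [Finset.mem_filter, Finset.mem_univ, true_and, Fin.lt_def] at ha
    have := a.isLt
    simp only [Finset.mem_range]
    omega
  · intro k hk
    simp only [Finset.mem_range] at hk
    have := j.isLt
    simp only [Finset.mem_filter, Finset.mem_univ, true_and, Fin.lt_def]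
    omega
  · intro a ha
    simp only [Finset.mem_filter, Finset.mem_univ, true_and, Fin.lt_def] at ha
    have h1 := a.isLt
    have h2 := j.isLt
    apply Fin.ext
    simp only
    omega
  · intro k hk
    simp only [Finset.mem_range] at hk
    simp only
    omega
  · intro a ha
    rfl

lemma count_le_pow_lt {n : ℕ} {w : List (Fin n)} (hr : Reduced w) :
    ∀ (m : ℕ) (j : Fin n), (j : ℕ) ≤ m → w.count j ≤ 2 ^ (j : ℕ) := by
  intro m
  induction m with
  | zero =>
      intro j hj
      have hg : Gap (fun a => decide (a < j)) j w := by
        intro x u y he hju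
        obtain ⟨⟨a, ha, hal⟩, _⟩ := hr x j u y he hju
        exact ⟨a, ha, decide_eq_true hal⟩
      have h1 := count_le_of_gap hg
      rw [countP_eq_sum] at h1
      have hempty : Finset.univ.filter (fun i => decide (i < j) = true) = (∅ : Finset (Fin n)) := by
        rw [Finset.filter_eq_empty_iff]
        intro i _
        simp only [decide_eq_true_eq, Fin.lt_def]
        omega
      rw [hempty] at h1
      simpa [Nat.le_zero.mp hj] using h1
  | succ m ih =>
      intro j hj
      have hg : Gap (fun a => decide (a < j)) j w := by
        intro x u y he hju
        obtain ⟨⟨a, ha, hal⟩, _⟩ := hr x j u y he hju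
        exact ⟨a, ha, decide_eq_true hal⟩
      have h1 := count_le_of_gap hg
      rw [countP_eq_sum] at h1
      have hfe : Finset.univ.filter (fun i => decide (i < j) = true)
          = Finset.univ.filter (fun i : Fin n => i < j) := by
        apply Finset.filter_congr
        intro i _
        simp
      rw [hfe] at h1
      have h2 : ∑ i ∈ Finset.univ.filter (fun i : Fin n => i < j), w.count i
          ≤ ∑ i ∈ Finset.univ.filter (fun i : Fin n => i < j), 2 ^ (i : ℕ) := by
        apply Finset.sum_le_sum
        intro i hi
        simp only [Finset.mem_filter, Finset.mem_univ, true_and, Fin.lt_def] at hi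
        exact ih i (by omega)
      rw [sum_filter_lt j (fun k => 2 ^ k), sum_range_two_pow] at h2
      have h3 : 1 ≤ 2 ^ (j : ℕ) := Nat.one_le_two_pow
      omega

lemma count_le_pow_gt {n : ℕ} {w : List (Fin n)} (hr : Reduced w) :
    ∀ (m : ℕ) (j : Fin n), n - 1 - (j : ℕ) ≤ m → w.count j ≤ 2 ^ (n - 1 - (j : ℕ)) := by
  intro m
  induction m with
  | zero =>
      intro j hj
      have hg : Gap (fun a => decide (j < a)) j w := by
        intro x u y he hju
        obtain ⟨_, ⟨b, hb, hbl⟩⟩ := hr x j u y he hju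
        exact ⟨b, hb, decide_eq_true hbl⟩
      have h1 := count_le_of_gap hg
      rw [countP_eq_sum] at h1
      have hempty : Finset.univ.filter (fun i => decide (j < i) = true) = (∅ : Finset (Fin n)) := by
        rw [Finset.filter_eq_empty_iff]
        intro i _
        have := i.isLt
        have := j.isLt
        simp only [decide_eq_true_eq, Fin.lt_def]
        omega
      rw [hempty] at h1
      simpa [Nat.le_zero.mp hj] using h1
  | succ m ih =>
      intro j hj
      have hg : Gap (fun a => decide (j < a)) j w := by
        intro x u y he hju
        obtain ⟨_, ⟨b, hb, hbl⟩⟩ := hr x j u y he hju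
        exact ⟨b, hb, decide_eq_true hbl⟩
      have h1 := count_le_of_gap hg
      rw [countP_eq_sum] at h1
      have hfe : Finset.univ.filter (fun i => decide (j < i) = true)
          = Finset.univ.filter (fun i : Fin n => j < i) := by
        apply Finset.filter_congr
        intro i _
        simp
      rw [hfe] at h1
      have h2 : ∑ i ∈ Finset.univ.filter (fun i : Fin n => j < i), w.count i
          ≤ ∑ i ∈ Finset.univ.filter (fun i : Fin n => j < i), 2 ^ (n - 1 - (i : ℕ)) := by
        apply Finset.sum_le_sum
        intro i hi
        simp only [Finset.mem_filter, Finset.mem_univ, true_and, Fin.lt_def] at hi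
        have := i.isLt
        exact ih i (by omega)
      rw [sum_filter_gt j, sum_range_two_pow] at h2
      have h3 : 1 ≤ 2 ^ (n - 1 - (j : ℕ)) := Nat.one_le_two_pow
      omega

lemma count_le_min {n : ℕ} {w : List (Fin n)} (hr : Reduced w) (j : Fin n) :
    w.count j ≤ 2 ^ (min (j : ℕ) (n - 1 - (j : ℕ))) := by
  rcases le_total (j : ℕ) (n - 1 - (j : ℕ)) with h | h
  · rw [min_eq_left h]
    exact count_le_pow_lt hr (j : ℕ) j le_rfl
  · rw [min_eq_right h]
    exact count_le_pow_gt hr (n - 1 - (j : ℕ)) j le_rfl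

lemma length_eq_sum_count {n : ℕ} (w : List (Fin n)) :
    w.length = ∑ i : Fin n, w.count i := by
  induction w with
  | nil => simp
  | cons a w ih =>
      simp only [List.length_cons, List.count_cons, Finset.sum_add_distrib, ← ih, beq_iff_eq]
      rw [Finset.sum_ite_eq Finset.univ a (fun _ => 1)]
      simp

lemma Lbound_step (m : ℕ) : Lbound (m + 2) = 2 * Lbound m + 2 := by
  unfold Lbound
  have h2 : (m + 2) % 2 = m % 2 := by omega
  have h3 : (m + 2) / 2 = m / 2 + 1 := by omega
  rw [h2, h3]
  rcases Nat.mod_two_eq_zero_or_one m with h | h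
  · rw [if_pos h, if_pos h, pow_succ]
    have : 2 ≤ 2 ^ (m / 2 + 1) := by
      calc 2 = 2 ^ 1 := rfl
      _ ≤ 2 ^ (m / 2 + 1) := Nat.pow_le_pow_right (by norm_num) (by omega)
    omega
  · rw [if_neg (by omega), if_neg (by omega), pow_succ]
    have : 1 ≤ 2 ^ (m / 2) := Nat.one_le_two_pow
    omega

lemma sum_min_pow : ∀ m, ∑ k ∈ Finset.range m, 2 ^ (min k (m - 1 - k)) = Lbound m := by
  have key : ∀ N m, m ≤ N → ∑ k ∈ Finset.range m, 2 ^ (min k (m - 1 - k)) = Lbound m := by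
    intro N
    induction N with
    | zero =>
        intro m hm
        have : m = 0 := by omega
        subst this
        simp [Lbound]
    | succ N ih =>
        intro m hm
        match m with
        | 0 => simp [Lbound]
        | 1 => simp [Lbound]
        | (m + 2) =>
          rw [Finset.sum_range_succ, Finset.sum_range_succ']
          have e0 : 2 ^ (min 0 (m + 2 - 1 - 0)) = 1 := by simp
          have e1 : 2 ^ (min (m + 1) (m + 2 - 1 - (m + 1))) = 1 := by
            have h0 : m + 2 - 1 - (m + 1) = 0 := by omega
            rw [h0]
            simp
          rw [e0, e1]
          have emid : ∀ k ∈ Finset.range m,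
              2 ^ (min (k + 1) (m + 2 - 1 - (k + 1))) = 2 * 2 ^ (min k (m - 1 - k)) := by
            intro k hk
            simp only [Finset.mem_range] at hk
            have : min (k + 1) (m + 2 - 1 - (k + 1)) = min k (m - 1 - k) + 1 := by omega
            rw [this, pow_succ, Nat.mul_comm]
          rw [Finset.sum_congr rfl emid, ← Finset.mul_sum, ih m (by omega), Lbound_step]
  intro m
  exact key m m le_rfl

lemma reduced_length {n : ℕ} {w : List (Fin n)} (hr : Reduced w) : w.length ≤ Lbound n := by
  rw [length_eq_sum_count]
  calc ∑ i : Fin n, w.count i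
      ≤ ∑ i : Fin n, 2 ^ (min (i : ℕ) (n - 1 - (i : ℕ))) :=
        Finset.sum_le_sum (fun i _ => count_le_min hr i)
    _ = ∑ k ∈ Finset.range n, 2 ^ (min k (n - 1 - k)) :=
        Fin.sum_univ_eq_sum_range (fun k => 2 ^ (min k (n - 1 - k))) n
    _ = Lbound n := sum_min_pow n

lemma km_replicate {n : ℕ} (j : Fin n) : ∀ k, km (List.replicate (k + 1) j) = ka j
  | 0 => km_singleton j
  | k + 1 => by
      rw [List.replicate_succ, km_cons, km_replicate j k, ka_idem]

lemma list_ofFn_len {α : Type*} : ∀ (m : ℕ) (l : List α), l.length = m →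
    ∃ v : Fin m → α, List.ofFn v = l := by
  intro m l h
  subst h
  exact ⟨l.get, List.ofFn_get l⟩

/-- Every non-identity element of `K_n` is represented by a word of length at most
`L(n)`; consequently `K_n` is finite and `|K_n| ≤ 1 + n^{L(n)}`. -/
theorem kiselman_finite (n : ℕ) :
    (∀ x : Kiselman n, x ≠ 1 → ∃ w : FreeMonoid (Fin n),
      kmk n w = x ∧ w.toList.length ≤ Lbound n) ∧
    Finite (Kiselman n) ∧ Nat.card (Kiselman n) ≤ 1 + n ^ Lbound n := by
  have part1 : ∀ x : Kiselman n, ∃ w : FreeMonoid (Fin n),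
      kmk n w = x ∧ w.toList.length ≤ Lbound n := by
    intro x
    obtain ⟨w0, hw0⟩ := PresentedMonoid.surjective_mk (rels := KisRel n) x
    obtain ⟨w', h1, h2, h3⟩ := reduce_aux (FreeMonoid.toList w0).length (FreeMonoid.toList w0) le_rfl
    refine ⟨FreeMonoid.ofList w', ?_, ?_⟩
    · have hkm : km (FreeMonoid.toList w0) = kmk n w0 := by
        unfold km
        rw [FreeMonoid.ofList_toList]
      calc kmk n (FreeMonoid.ofList w') = km w' := rfl
        _ = km (FreeMonoid.toList w0) := h1
        _ = kmk n w0 := hkm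
        _ = x := hw0
    · simpa [FreeMonoid.toList_ofList] using reduced_length h3
  have hsurj : Function.Surjective
      (fun o : Option (Fin (Lbound n) → Fin n) =>
        o.elim (1 : Kiselman n) (fun v => km (List.ofFn v))) := by
    intro x
    obtain ⟨w, hw, hlen⟩ := part1 x
    rcases List.eq_nil_or_concat' (FreeMonoid.toList w) with hnil | ⟨l₂, j, hl⟩
    · refine ⟨none, ?_⟩
      have hw1 : w = 1 := by
        have : FreeMonoid.ofList (FreeMonoid.toList w) = w := FreeMonoid.ofList_toList w
        rw [hnil] at this
        exact this.symm
      simp only [Option.elim]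
      rw [← hw, hw1, map_one]
    · have hlen2 : l₂.length + 1 ≤ Lbound n := by
        rw [hl] at hlen
        simpa using hlen
      set k := Lbound n - (l₂.length + 1) with hk
      have hplen : (l₂ ++ List.replicate (k + 1) j).length = Lbound n := by
        simp only [List.length_append, List.length_replicate]
        omega
      have hpkm : km (l₂ ++ List.replicate (k + 1) j) = x := by
        rw [km_append, km_replicate, ← km_singleton, ← km_append, ← hl]
        calc km (FreeMonoid.toList w) = kmk n w := by
              unfold km; rw [FreeMonoid.ofList_toList]
          _ = x := hw
      obtain ⟨v, hv⟩ := list_ofFn_len (Lbound n) (l₂ ++ List.replicate (k + 1) j) hplen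
      refine ⟨some v, ?_⟩
      simp only [Option.elim]
      rw [hv]
      exact hpkm
  have hfin : Finite (Kiselman n) := Finite.of_surjective _ hsurj
  refine ⟨fun x _ => part1 x, hfin, ?_⟩
  have hcard := Nat.card_le_card_of_surjective _ hsurj
  rw [Finite.card_option, Nat.card_fun, Nat.card_eq_fintype_card (α := Fin n),
    Nat.card_eq_fintype_card (α := Fin (Lbound n)), Fintype.card_fin, Fintype.card_fin] at hcard
  omega
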